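/- arXiv:2208.00152 — 2 statements merged into one kernel-verified Lean document; each statement's English description precedes it below -/
import Mathlib

section
/- Let G be a finite simple graph and v a vertex of G. If the ego subgraph E₂(v) of radius 2 centered at v (the subgraph induced on the disk D₂(v) of vertices reachable from v at distance at most 2) is a tree, then s₂(v) = ŝ(v), where s₂(v) = |{u : d(v,u) = 2}| and ŝ(v) = Σ_{u ∈ N(v)} (deg(u) − 1). -/
open Finset

/-- If the ego subgraph `E₂(v)` of radius 2 centered at `v` (the subgraph of `G`
induced on the disk `D₂(v)` of vertices reachable from `v` at distance at most 2) is a tree,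
then `s₂(v) = ŝ(v)`, where `s₂(v) = |{u : d(v,u) = 2}|` and `ŝ(v) = Σ_{u ∈ N(v)} (deg(u) − 1)`. -/
theorem ndf_ego_tree_s2_eq_shat {V : Type*} [Fintype V] [DecidableEq V]
    (G : SimpleGraph V) [DecidableRel G.Adj] (v : V)
    (h : (G.induce {u : V | G.Reachable v u ∧ G.dist v u ≤ 2}).IsTree) :
    (univ.filter (fun u => G.dist v u = 2)).card =
      ∑ u ∈ G.neighborFinset v, (G.degree u - 1) := by
  classical
  set S : Set V := {u : V | G.Reachable v u ∧ G.dist v u ≤ 2} with hS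
  have hvS : v ∈ S := ⟨SimpleGraph.Reachable.refl v, by simp [SimpleGraph.dist_self]⟩
  have hmem1 : ∀ {a : V}, G.Adj v a → a ∈ S := by
    intro a ha
    exact ⟨ha.reachable, le_trans (SimpleGraph.dist_le ha.toWalk) (by norm_num)⟩
  have hmem2 : ∀ {a b : V}, G.Adj v a → G.Adj a b → b ∈ S := by
    intro a b ha hb
    refine ⟨(ha.reachable).trans hb.reachable, ?_⟩
    have := SimpleGraph.dist_le (SimpleGraph.Walk.cons ha hb.toWalk)
    simpa using this
  have huniq : ∀ {a b : S} (p q : (G.induce S).Walk a b),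
      p.IsPath → q.IsPath → p = q := by
    intro a b p q hp hq
    exact ((h.existsUnique_path a b).unique hp hq)
  -- L1 : no triangles through v
  have L1 : ∀ {u w : V}, G.Adj v u → G.Adj u w → G.Adj v w → False := by
    intro u w hu huw hvw
    have hune : u ≠ w := huw.ne
    have hvw' : v ≠ w := hvw.ne
    have hvu' : v ≠ u := hu.ne
    let v' : S := ⟨v, hvS⟩
    let u' : S := ⟨u, hmem1 hu⟩
    let w' : S := ⟨w, hmem1 hvw⟩
    have a1 : (G.induce S).Adj v' u' := by simpa [v', u'] using hu
    have a2 : (G.induce S).Adj u' w' := by simpa [u', w'] using huw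
    have a3 : (G.induce S).Adj v' w' := by simpa [v', w'] using hvw
    have hne1 : u' ≠ w' := by simp [u', w', Subtype.ext_iff, hune]
    have hne2 : v' ≠ w' := by simp [v', w', Subtype.ext_iff, hvw']
    let p : (G.induce S).Walk v' w' := a3.toWalk
    let q : (G.induce S).Walk v' w' := SimpleGraph.Walk.cons a1 a2.toWalk
    have hp : p.IsPath := by
      simp [p, SimpleGraph.Adj.toWalk, SimpleGraph.Walk.cons_isPath_iff, hne2]
    have hq : q.IsPath := by
      simp [q, SimpleGraph.Adj.toWalk, SimpleGraph.Walk.cons_isPath_iff, hne1, hne2,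
        a3.ne, a1.ne]
    have := huniq p q hp hq
    have hlen := congrArg SimpleGraph.Walk.length this
    simp [p, q, SimpleGraph.Adj.toWalk] at hlen
  -- L2 : each vertex at distance 2 has a unique neighbor among N(v)
  have L2 : ∀ {u₁ u₂ w : V}, G.Adj v u₁ → G.Adj v u₂ → G.Adj u₁ w → G.Adj u₂ w →
      w ≠ v → u₁ = u₂ := by
    intro u₁ u₂ w h1 h2 h3 h4 hwv
    by_contra hne
    let v' : S := ⟨v, hvS⟩
    let u₁' : S := ⟨u₁, hmem1 h1⟩
    let u₂' : S := ⟨u₂, hmem1 h2⟩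
    let w' : S := ⟨w, hmem2 h1 h3⟩
    have a1 : (G.induce S).Adj v' u₁' := by simpa [v', u₁'] using h1
    have a2 : (G.induce S).Adj u₁' w' := by simpa [u₁', w'] using h3
    have a3 : (G.induce S).Adj v' u₂' := by simpa [v', u₂'] using h2
    have a4 : (G.induce S).Adj u₂' w' := by simpa [u₂', w'] using h4
    have hne1 : u₁' ≠ w' := by simp [u₁', w', Subtype.ext_iff, h3.ne]
    have hne2 : v' ≠ w' := by simp [v', w', Subtype.ext_iff, (Ne.symm hwv)]
    have hne3 : u₂' ≠ w' := by simp [u₂', w', Subtype.ext_iff, h4.ne]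
    let p : (G.induce S).Walk v' w' := SimpleGraph.Walk.cons a1 a2.toWalk
    let q : (G.induce S).Walk v' w' := SimpleGraph.Walk.cons a3 a4.toWalk
    have hp : p.IsPath := by
      simp [p, SimpleGraph.Adj.toWalk, SimpleGraph.Walk.cons_isPath_iff, hne1, hne2, a1.ne]
    have hq : q.IsPath := by
      simp [q, SimpleGraph.Adj.toWalk, SimpleGraph.Walk.cons_isPath_iff, hne3, hne2, a3.ne]
    have heq := huniq p q hp hq
    have hsup := congrArg SimpleGraph.Walk.support heq
    simp only [p, q, SimpleGraph.Adj.toWalk, SimpleGraph.Walk.support_cons,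
      SimpleGraph.Walk.support_nil] at hsup
    have : u₁' = u₂' := by
      injection hsup with _ hsup'
      injection hsup'
    exact hne (by simpa [u₁', u₂', Subtype.ext_iff] using this)
  -- the distance-2 sphere equals the disjoint union of punctured neighborhoods
  have key : univ.filter (fun u => G.dist v u = 2) =
      (G.neighborFinset v).biUnion (fun u => (G.neighborFinset u).erase v) := by
    ext w
    simp only [mem_filter, mem_univ, true_and, mem_biUnion, mem_erase,
      SimpleGraph.mem_neighborFinset]
    constructor
    · intro hw
      obtain ⟨p, hp⟩ := SimpleGraph.exists_walk_of_dist_ne_zero (u := v) (v := w)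
        (by rw [hw]; exact two_ne_zero)
      rw [hw] at hp
      cases p with
      | nil => simp at hp
      | cons ha q =>
        cases q with
        | nil => simp at hp
        | cons hb r =>
          cases r with
          | nil =>
            refine ⟨_, ha, ?_, hb⟩
            intro hwv
            subst hwv
            simp [SimpleGraph.dist_self] at hw
          | cons hc r => simp at hp
    · rintro ⟨u, hu, hwv, huw⟩
      have hle : G.dist v w ≤ 2 := by
        have := SimpleGraph.dist_le (SimpleGraph.Walk.cons hu huw.toWalk)
        simpa using this
      have hne0 : G.dist v w ≠ 0 :=
        SimpleGraph.dist_ne_zero_iff_ne_and_reachable.mpr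
          ⟨Ne.symm hwv, hu.reachable.trans huw.reachable⟩
      have hne1 : G.dist v w ≠ 1 := fun h1 =>
        L1 hu huw (SimpleGraph.dist_eq_one_iff_adj.mp h1)
      omega
  rw [key, card_biUnion]
  · refine Finset.sum_congr rfl ?_
    intro u hu
    rw [SimpleGraph.mem_neighborFinset] at hu
    rw [card_erase_of_mem (by rw [SimpleGraph.mem_neighborFinset]; exact hu.symm)]
    rfl
  · intro u₁ h1 u₂ h2 hne
    rw [Finset.mem_coe, SimpleGraph.mem_neighborFinset] at h1 h2
    simp only [Function.onFun, disjoint_left, mem_erase, SimpleGraph.mem_neighborFinset]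
    rintro w ⟨hwv, hw1⟩ ⟨_, hw2⟩
    exact hne (L2 h1 h2 hw1 hw2 hwv)
end

section
/- Let G be a finite simple graph, v a vertex of G, and let E₂′(v) be the graph obtained from the ego subgraph E₂(v) (the subgraph induced on the disk D₂(v)) by deleting every edge both of whose endpoints lie in the circle C₂(v). Then s₂(v) = ŝ(v) if and only if E₂′(v) is a tree, where s₂(v) = |C₂(v)| and ŝ(v) = Σ_{u ∈ N(v)} (deg(u) − 1). -/
open Finset

section Helpers
open SimpleGraph

lemma connected_sdiff_of_reachable {α : Type*} {G : SimpleGraph α} {a b : α}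
    (hc : G.Connected)
    (hr : (G \ SimpleGraph.fromEdgeSet {s(a, b)}).Reachable a b) :
    (G \ SimpleGraph.fromEdgeSet {s(a, b)}).Connected := by
  haveI : Nonempty α := hc.nonempty
  refine SimpleGraph.Connected.mk fun x y => ?_
  obtain ⟨p⟩ := hc.preconnected x y
  induction p with
  | nil => exact Reachable.refl _
  | @cons x z y h q ih =>
    refine Reachable.trans ?_ ih
    by_cases he : s(x, z) = s(a, b)
    · rw [Sym2.eq_iff] at he
      rcases he with ⟨rfl, rfl⟩ | ⟨rfl, rfl⟩
      · exact hr
      · exact hr.symm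
    · exact SimpleGraph.Adj.reachable (by
        rw [SimpleGraph.sdiff_adj]
        exact ⟨h, fun hadj => he ((SimpleGraph.fromEdgeSet_adj _).mp hadj).1⟩)

lemma card_le_of_connected : ∀ (n : ℕ) {α : Type*} [Fintype α] (G : SimpleGraph α)
    [Fintype G.edgeSet], G.edgeFinset.card = n → G.Connected →
    Fintype.card α ≤ n + 1 ∧ (¬ G.IsAcyclic → Fintype.card α ≤ n) := by
  intro n
  induction n using Nat.strong_induction_on with
  | _ n ih =>
    intro α _ G _ hcard hconn
    classical
    by_cases hac : G.IsAcyclic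
    · have ht : G.IsTree := ⟨hconn, hac⟩
      have := ht.card_edgeFinset
      constructor
      · omega
      · intro h; exact absurd hac h
    · simp only [SimpleGraph.IsAcyclic, not_forall] at hac
      obtain ⟨u, c, hc⟩ := hac
      rw [not_not] at hc
      have hlen := hc.three_le_length
      have hedne : c.edges ≠ [] := by
        intro h
        have := c.length_edges
        rw [h] at this
        simp at this
        omega
      obtain ⟨e, he⟩ := List.exists_mem_of_ne_nil _ hedne
      have heE : e ∈ G.edgeSet := c.edges_subset_edgeSet he
      induction e using Sym2.ind with
      | _ a b =>
      have hadj : G.Adj a b := heE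
      have hnb : ¬ G.IsBridge s(a, b) := by
        rw [SimpleGraph.isBridge_iff_adj_and_forall_cycle_notMem heE]
        intro hforall
        exact hforall c hc he
      rw [SimpleGraph.isBridge_iff] at hnb
      push_neg at hnb
      have hr := hnb
      set G' := G \ SimpleGraph.fromEdgeSet {s(a, b)} with hG'
      have hconn' : G'.Connected := connected_sdiff_of_reachable hconn hr
      have hES : G'.edgeSet = G.edgeSet \ {s(a, b)} := by
        rw [hG', SimpleGraph.edgeSet_sdiff, SimpleGraph.edgeSet_fromEdgeSet,
          SimpleGraph.edgeSet_sdiff_sdiff_isDiag]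
      haveI : Fintype G'.edgeSet := Set.Finite.fintype (Set.toFinite _)
      have hEF : G'.edgeFinset = G.edgeFinset.erase s(a, b) := by
        ext e
        simp [SimpleGraph.mem_edgeFinset, hES, and_comm]
      have hmem : s(a, b) ∈ G.edgeFinset := SimpleGraph.mem_edgeFinset.mpr heE
      have hcard' : G'.edgeFinset.card = n - 1 := by
        rw [hEF, Finset.card_erase_of_mem hmem, hcard]
      have hn1 : 1 ≤ n := by
        rw [← hcard]
        exact Finset.card_pos.mpr ⟨_, hmem⟩
      have hlt : n - 1 < n := by omega
      have := (ih (n - 1) hlt G' hcard' hconn').1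
      constructor
      · omega
      · intro _; omega

lemma exists_mid_of_dist_two {α : Type*} {G : SimpleGraph α} {v u : α}
    (h : G.dist v u = 2) : ∃ w, G.Adj v w ∧ G.Adj w u := by
  obtain ⟨p, hp⟩ := G.exists_walk_of_dist_ne_zero (u := v) (v := u) (by rw [h]; omega)
  rw [h] at hp
  match p, hp with
  | .cons h1 (.cons h2 .nil), _ => exact ⟨_, h1, h2⟩

lemma reachable_of_dist_two {α : Type*} {G : SimpleGraph α} {v u : α}
    (h : G.dist v u = 2) : G.Reachable v u := by
  by_contra hr
  rw [SimpleGraph.dist_eq_zero_of_not_reachable hr] at h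
  omega

lemma degree_eq_card_of_subtype {α : Type*} [Fintype α] {p : α → Prop}
    [Fintype {x // p x}] (G' : SimpleGraph {x // p x}) [DecidableRel G'.Adj]
    (a : {x // p x}) (s : Finset α)
    (h1 : ∀ x (h : p x), G'.Adj a ⟨x, h⟩ ↔ x ∈ s) (h2 : ∀ x ∈ s, p x) :
    G'.degree a = s.card := by
  show (G'.neighborFinset a).card = s.card
  refine Finset.card_bij (fun b _ => b.1) ?_ ?_ ?_
  · intro b hb
    rw [SimpleGraph.mem_neighborFinset] at hb
    exact (h1 b.1 b.2).mp hb
  · intro b _ c _ hbc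
    exact Subtype.ext hbc
  · intro x hx
    exact ⟨⟨x, h2 x hx⟩, (SimpleGraph.mem_neighborFinset _ _ _).mpr ((h1 x _).mpr hx), rfl⟩

end Helpers

/-- The graph `E₂′(v)`: the subgraph of `G` induced on the disk `D₂(v)` (vertices reachable
from `v` at distance at most 2), with every edge whose both endpoints lie in the circle
`C₂(v)` deleted. -/
def egoTwoPrime {V : Type*} (G : SimpleGraph V) (v : V) :
    SimpleGraph {u : V // G.Reachable v u ∧ G.dist v u ≤ 2} where
  Adj a b := G.Adj a b ∧ ¬(G.dist v a = 2 ∧ G.dist v b = 2)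
  symm := ⟨by
    rintro a b ⟨h1, h2⟩
    exact ⟨h1.symm, fun ⟨x, y⟩ => h2 ⟨y, x⟩⟩⟩
  loopless := ⟨fun a h => G.loopless.irrefl a h.1⟩

/-- `s₂(v) = ŝ(v)` if and only if `E₂′(v)` is a tree, where
`s₂(v) = |C₂(v)|` and `ŝ(v) = Σ_{u ∈ N(v)} (deg(u) − 1)`. -/
theorem ndf_s2_eq_shat_iff_egoPrime_tree {V : Type*} [Fintype V] [DecidableEq V]
    (G : SimpleGraph V) [DecidableRel G.Adj] (v : V) :
    (univ.filter (fun u => G.dist v u = 2)).card =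
      ∑ u ∈ G.neighborFinset v, (G.degree u - 1) ↔
    (egoTwoPrime G v).IsTree := by
  classical
  set C1 := G.neighborFinset v with hC1
  set C2 := univ.filter (fun u => G.dist v u = 2) with hC2
  set p := fun u => G.Reachable v u ∧ G.dist v u ≤ 2 with hp
  set t : V → ℕ := fun w => (C1.filter (fun u => G.Adj u w)).card with ht
  -- basic membership facts
  have hmemC1 : ∀ x, x ∈ C1 ↔ G.dist v x = 1 := by
    intro x
    rw [hC1, SimpleGraph.mem_neighborFinset, SimpleGraph.dist_eq_one_iff_adj]
  have hmemC2 : ∀ x, x ∈ C2 ↔ G.dist v x = 2 := by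
    intro x; simp [hC2]
  have hpC1 : ∀ x ∈ C1, p x := by
    intro x hx
    rw [SimpleGraph.mem_neighborFinset] at hx
    refine ⟨hx.reachable, ?_⟩
    rw [SimpleGraph.dist_eq_one_iff_adj.mpr hx]; omega
  have hpC2 : ∀ x ∈ C2, p x := by
    intro x hx
    rw [hmemC2] at hx
    exact ⟨reachable_of_dist_two hx, by omega⟩
  have hdistv : G.dist v v = 0 := SimpleGraph.dist_self
  have hpv : p v := ⟨SimpleGraph.Reachable.refl v, by omega⟩
  have hvC1 : v ∉ C1 := by rw [hmemC1]; omega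
  have hvC2 : v ∉ C2 := by rw [hmemC2]; omega
  have hdisj : Disjoint C1 C2 := by
    rw [Finset.disjoint_left]
    intro x h1 h2
    rw [hmemC1] at h1; rw [hmemC2] at h2; omega
  set D := insert v (C1 ∪ C2) with hD
  have hmemD : ∀ x, x ∈ D ↔ p x := by
    intro x
    constructor
    · intro hx
      rcases Finset.mem_insert.mp hx with rfl | hx
      · exact hpv
      rcases Finset.mem_union.mp hx with hx | hx
      · exact hpC1 x hx
      · exact hpC2 x hx
    · rintro ⟨hr, hd⟩
      have h3 : G.dist v x = 0 ∨ G.dist v x = 1 ∨ G.dist v x = 2 := by omega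
      rcases h3 with h3 | h3 | h3
      · have : v = x := by
          rcases SimpleGraph.dist_eq_zero_iff_eq_or_not_reachable.mp h3 with h | h
          · exact h
          · exact absurd hr h
        subst this
        exact Finset.mem_insert_self _ _
      · exact Finset.mem_insert_of_mem (Finset.mem_union_left _ ((hmemC1 x).mpr h3))
      · exact Finset.mem_insert_of_mem (Finset.mem_union_right _ ((hmemC2 x).mpr h3))
  have hcards_eq : Fintype.card {u : V // p u} =
      Fintype.card {u : V // G.Reachable v u ∧ G.dist v u ≤ 2} := rfl
  -- the element v in the subtype
  set v0 : {u : V // p u} := ⟨v, hpv⟩ with hv0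
  -- connectivity
  have hreach : ∀ a : {u : V // p u}, (egoTwoPrime G v).Reachable v0 a := by
    rintro ⟨x, hx⟩
    have h3 : G.dist v x = 0 ∨ G.dist v x = 1 ∨ G.dist v x = 2 := by
      have := hx.2; omega
    rcases h3 with h3 | h3 | h3
    · have : v = x := by
        rcases SimpleGraph.dist_eq_zero_iff_eq_or_not_reachable.mp h3 with h | h
        · exact h
        · exact absurd hx.1 h
      subst this
      exact SimpleGraph.Reachable.refl _
    · have hadj : G.Adj v x := SimpleGraph.dist_eq_one_iff_adj.mp h3
      exact SimpleGraph.Adj.reachable ⟨hadj, by simp [hv0, hdistv]⟩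
    · obtain ⟨w, hvw, hwx⟩ := exists_mid_of_dist_two h3
      have hw1 : G.dist v w = 1 := SimpleGraph.dist_eq_one_iff_adj.mpr hvw
      have hwp : p w := hpC1 w ((SimpleGraph.mem_neighborFinset _ _ _).mpr hvw)
      have e1 : (egoTwoPrime G v).Adj v0 ⟨w, hwp⟩ := ⟨hvw, by simp [hv0, hdistv]⟩
      have e2 : (egoTwoPrime G v).Adj ⟨w, hwp⟩ ⟨x, hx⟩ := ⟨hwx, by simp [hw1]⟩
      exact (SimpleGraph.Adj.reachable e1).trans (SimpleGraph.Adj.reachable e2)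
  have hconn : (egoTwoPrime G v).Connected := by
    haveI : Nonempty {u : V // p u} := ⟨v0⟩
    exact SimpleGraph.Connected.mk fun a b => (hreach a).symm.trans (hreach b)
  -- degrees
  haveI : DecidableRel (egoTwoPrime G v).Adj := fun a b => Classical.dec _
  have hdeg : ∀ (x : V) (hx : p x), (egoTwoPrime G v).degree ⟨x, hx⟩ =
      if x = v then C1.card else if G.dist v x = 1 then G.degree x else t x := by
    intro x hx
    have h3 : G.dist v x = 0 ∨ G.dist v x = 1 ∨ G.dist v x = 2 := by
      have := hx.2; omega
    rcases h3 with h3 | h3 | h3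
    · have hxv : x = v := by
        rcases SimpleGraph.dist_eq_zero_iff_eq_or_not_reachable.mp h3 with h | h
        · exact h.symm
        · exact absurd hx.1 h
      rw [if_pos hxv]
      refine degree_eq_card_of_subtype _ _ C1 ?_ hpC1
      intro y hy
      show (G.Adj x y ∧ ¬(G.dist v x = 2 ∧ G.dist v y = 2)) ↔ y ∈ C1
      rw [SimpleGraph.mem_neighborFinset]
      constructor
      · intro h; rw [← hxv]; exact h.1
      · intro h; exact ⟨by rw [hxv]; exact h, by omega⟩
    · have hxv : x ≠ v := by intro h; subst h; omega
      rw [if_neg hxv, if_pos h3]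
      refine degree_eq_card_of_subtype _ _ (G.neighborFinset x) ?_ ?_
      · intro y hy
        show (G.Adj x y ∧ ¬(G.dist v x = 2 ∧ G.dist v y = 2)) ↔ y ∈ G.neighborFinset x
        rw [SimpleGraph.mem_neighborFinset]
        constructor
        · exact fun h => h.1
        · intro h; exact ⟨h, by omega⟩
      · intro y hy
        rw [SimpleGraph.mem_neighborFinset] at hy
        have hadjvx : G.Adj v x := SimpleGraph.dist_eq_one_iff_adj.mp h3
        have : G.dist v y ≤ 2 := by
          have hw : (SimpleGraph.Walk.cons hadjvx
              (SimpleGraph.Walk.cons hy SimpleGraph.Walk.nil) : G.Walk v y).length = 2 := rfl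
          have := SimpleGraph.dist_le (SimpleGraph.Walk.cons hadjvx
              (SimpleGraph.Walk.cons hy SimpleGraph.Walk.nil))
          omega
        exact ⟨hadjvx.reachable.trans hy.reachable, this⟩
    · have hxv : x ≠ v := by intro h; subst h; omega
      rw [if_neg hxv, if_neg (by omega)]
      refine degree_eq_card_of_subtype _ _ (C1.filter (fun u => G.Adj u x)) ?_ ?_
      · intro y hy
        show (G.Adj x y ∧ ¬(G.dist v x = 2 ∧ G.dist v y = 2)) ↔ _
        rw [Finset.mem_filter, hmemC1]
        constructor
        · rintro ⟨hadj, hn⟩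
          have hy2 : G.dist v y ≠ 2 := fun h => hn ⟨h3, h⟩
          have hyd : G.dist v y = 0 ∨ G.dist v y = 1 := by have := hy.2; omega
          rcases hyd with hyd | hyd
          · exfalso
            have : v = y := by
              rcases SimpleGraph.dist_eq_zero_iff_eq_or_not_reachable.mp hyd with h | h
              · exact h
              · exact absurd hy.1 h
            subst this
            have : G.dist v x = 1 := SimpleGraph.dist_eq_one_iff_adj.mpr hadj.symm
            omega
          · exact ⟨hyd, hadj.symm⟩
        · rintro ⟨hyd, hadj⟩
          exact ⟨hadj.symm, fun hcon => by omega⟩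
      · intro y hy
        exact hpC1 y (Finset.mem_filter.mp hy).1
  -- sum of degrees
  have hsum : ∑ a : {u : V // p u}, (egoTwoPrime G v).degree a =
      C1.card + ((∑ u ∈ C1, G.degree u) + ∑ w ∈ C2, t w) := by
    have e1 : ∑ a : {u : V // p u}, (egoTwoPrime G v).degree a =
        ∑ a : {u : V // p u}, (if a.1 = v then C1.card else
          if G.dist v a.1 = 1 then G.degree a.1 else t a.1) := by
      refine Finset.sum_congr rfl fun a _ => ?_
      exact hdeg a.1 a.2
    rw [e1, ← Finset.sum_subtype D hmemD (fun x => if x = v then C1.card else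
      if G.dist v x = 1 then G.degree x else t x)]
    rw [hD, Finset.sum_insert (by simp [hvC1, hvC2]), Finset.sum_union hdisj]
    rw [if_pos rfl]
    congr 1
    congr 1
    · refine Finset.sum_congr rfl fun u hu => ?_
      have h1 : G.dist v u = 1 := (hmemC1 u).mp hu
      rw [if_neg (by intro h; subst h; omega), if_pos h1]
    · refine Finset.sum_congr rfl fun w hw => ?_
      have h2 : G.dist v w = 2 := (hmemC2 w).mp hw
      rw [if_neg (by intro h; subst h; omega), if_neg (by omega)]
  -- edge count
  have hE : 2 * (egoTwoPrime G v).edgeSet.ncard =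
      C1.card + ((∑ u ∈ C1, G.degree u) + ∑ w ∈ C2, t w) := by
    have h2 := SimpleGraph.sum_degrees_eq_twice_card_edges (egoTwoPrime G v)
    rw [hsum] at h2
    rw [Set.ncard_eq_toFinset_card']; exact h2.symm
  -- card of vertex type
  have hcardS : Fintype.card {u : V // p u} = 1 + (C1.card + C2.card) := by
    rw [Fintype.card_of_subtype D hmemD, hD,
      Finset.card_insert_of_notMem (by simp [hvC1, hvC2]), Finset.card_union_of_disjoint hdisj]
    omega
  -- tree iff edge count
  have htree : (egoTwoPrime G v).IsTree ↔
      (egoTwoPrime G v).edgeSet.ncard + 1 = Fintype.card {u : V // p u} := by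
    haveI : Fintype (egoTwoPrime G v).edgeSet := Set.Finite.fintype (Set.toFinite _)
    have hnc : (egoTwoPrime G v).edgeSet.ncard = (egoTwoPrime G v).edgeFinset.card :=
      Set.ncard_eq_toFinset_card' _
    constructor
    · intro h
      have h2 := h.card_edgeFinset
      omega
    · intro h
      refine ⟨hconn, ?_⟩
      by_contra hac
      have h2 := (card_le_of_connected _ (egoTwoPrime G v) rfl hconn).2 hac
      omega
  -- ŝ and T
  set shat := ∑ u ∈ C1, (G.degree u - 1) with hshat
  have hdegsum : ∑ u ∈ C1, G.degree u = shat + C1.card := by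
    have hstep : ∀ u ∈ C1, G.degree u = (G.degree u - 1) + 1 := by
      intro u hu
      have : 1 ≤ G.degree u := by
        rw [← SimpleGraph.card_neighborFinset_eq_degree]
        refine Finset.card_pos.mpr ⟨v, ?_⟩
        exact (SimpleGraph.mem_neighborFinset _ _ _).mpr
          ((SimpleGraph.mem_neighborFinset _ _ _).mp hu).symm
      omega
    rw [Finset.sum_congr rfl hstep, Finset.sum_add_distrib, Finset.sum_const, smul_eq_mul,
      mul_one, hshat]
  set T := ∑ w ∈ C2, t w with hT
  have hT1 : C2.card ≤ T := by
    have := Finset.card_nsmul_le_sum C2 t 1 (fun x hx => ?_)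
    · simpa using this
    · rw [Nat.succ_le_iff]
      refine Finset.card_pos.mpr ?_
      obtain ⟨u, hvu, hux⟩ := exists_mid_of_dist_two ((hmemC2 x).mp hx)
      exact ⟨u, Finset.mem_filter.mpr ⟨(SimpleGraph.mem_neighborFinset _ _ _).mpr hvu, hux⟩⟩
  have hT2 : T ≤ shat := by
    have hswap : T = ∑ u ∈ C1, (C2.filter (fun w => G.Adj u w)).card := by
      rw [hT]
      simp only [ht, Finset.card_filter]
      rw [Finset.sum_comm]
    rw [hswap, hshat]
    refine Finset.sum_le_sum fun u hu => ?_
    have hvmem : v ∈ G.neighborFinset u := (SimpleGraph.mem_neighborFinset _ _ _).mpr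
      ((SimpleGraph.mem_neighborFinset _ _ _).mp hu).symm
    have hsub : C2.filter (fun w => G.Adj u w) ⊆ (G.neighborFinset u).erase v := by
      intro x hx
      rw [Finset.mem_filter] at hx
      rw [Finset.mem_erase, SimpleGraph.mem_neighborFinset]
      refine ⟨?_, hx.2⟩
      intro h; subst h
      have := (hmemC2 x).mp hx.1
      omega
    calc (C2.filter (fun w => G.Adj u w)).card ≤ ((G.neighborFinset u).erase v).card :=
          Finset.card_le_card hsub
      _ = G.degree u - 1 := by
          rw [Finset.card_erase_of_mem hvmem, SimpleGraph.card_neighborFinset_eq_degree]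
  -- final arithmetic
  rw [htree, hcardS]
  rw [hdegsum] at hE
  omega
end
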